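/- A field F cannot be covered by finitely many proper subfields: if F = F₁ ∪ ⋯ ∪ Fₖ where each Fᵢ is a subfield of F, then some Fᵢ = F. Equivalently, for every coloring of the elements of F in finitely many colors, some color class generates F as a field. -/

import Mathlib

open Pointwise

set_option synthInstance.maxHeartbeats 400000
set_option maxHeartbeats 800000


theorem field_not_union_of_proper_subfields
    {F : Type*} [Field F] (k : ℕ) (K : Fin k → Subfield F)
    (hcover : (⋃ i, (K i : Set F)) = Set.univ) :
    ∃ i, K i = ⊤ := by
  cases finite_or_infinite F with
  | inl hfin =>
    haveI := Fintype.ofFinite F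
    obtain ⟨g, hg⟩ := IsCyclic.exists_generator (α := Fˣ)
    have hmem : (g : F) ∈ ⋃ i, (K i : Set F) := hcover ▸ Set.mem_univ _
    obtain ⟨i, hi⟩ := Set.mem_iUnion.mp hmem
    refine ⟨i, eq_top_iff.mpr fun x _ => ?_⟩
    rcases eq_or_ne x 0 with rfl | hx
    · exact (K i).zero_mem
    · obtain ⟨n, hn⟩ := hg (Units.mk0 x hx)
      have : ((g : F)) ^ n = x := by
        have := congrArg (Units.val) hn
        simpa using this
      rw [← this]
      exact zpow_mem hi n
  | inr hinf =>
    have hcover' : ⋃ i ∈ (Finset.univ : Finset (Fin k)),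
        (0 : F) +ᵥ ((K i).toAddSubgroup : Set F) = Set.univ := by
      simpa using hcover
    obtain ⟨i, -, hfi⟩ := AddSubgroup.exists_finiteIndex_of_leftCoset_cover hcover'
    refine ⟨i, ?_⟩
    by_contra hne
    set L := K i
    haveI : Infinite L := by
      by_contra hLf
      rw [not_infinite_iff_finite] at hLf
      haveI : Finite L.toAddSubgroup :=
        Finite.of_injective (β := L) (fun x => ⟨x.1, x.2⟩)
          (fun a b h => by cases a; cases b; simpa using h)
      haveI : Finite (F ⧸ L.toAddSubgroup) := by haveI := hfi; exact AddSubgroup.finite_quotient_of_finiteIndex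
      have : Finite F := Finite.of_equiv _
        (AddSubgroup.addGroupEquivQuotientProdAddSubgroup (s := L.toAddSubgroup)).symm
      exact not_finite F
    let p : Submodule L F := Subalgebra.toSubmodule (⊥ : Subalgebra L F)
    have hpc : (p : Set F) = (L : Set F) := by
      ext x
      simp only [p, Subalgebra.coe_toSubmodule, Algebra.coe_bot, Set.mem_range]
      constructor
      · rintro ⟨y, rfl⟩; exact y.2
      · intro hx; exact ⟨⟨x, hx⟩, rfl⟩
    have hpfi : p.toAddSubgroup.FiniteIndex := by
      have : p.toAddSubgroup = L.toAddSubgroup := by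
        ext x
        change x ∈ (p : Set F) ↔ _
        rw [hpc]; rfl
      rw [this]; exact hfi
    haveI : Finite (F ⧸ p) := by haveI := hpfi; exact AddSubgroup.finite_quotient_of_finiteIndex
    haveI : Nontrivial (F ⧸ p) := by
      refine Submodule.Quotient.nontrivial_iff.mpr ?_
      intro htop
      apply hne
      refine eq_top_iff.mpr fun x _ => ?_
      have : x ∈ (p : Set F) := htop ▸ trivial
      rwa [hpc] at this
    haveI : Infinite (F ⧸ p) := Module.Free.infinite L (F ⧸ p)
    exact not_finite (F ⧸ p)
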